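/- Let k be an algebraically closed field with char k ≠ 2. Let d, d' ∈ k with d ≠ 1 and d' ≠ 1, and let ε, ε' ∈ {0,1}. Then there is a graded isomorphism S'(d,ε) ≅ S'(d',ε') if and only if ε = ε' and (d' = d, or d ≠ 0 and d' = d⁻¹). -/

import Mathlib

noncomputable section

/-- The free algebra on three generators `x, y, z` (indexed by `Fin 3`). -/
abbrev F3 (k : Type) [Field k] : Type := FreeAlgebra k (Fin 3)

noncomputable def X (k : Type) [Field k] : F3 k := FreeAlgebra.ι k 0
noncomputable def Y (k : Type) [Field k] : F3 k := FreeAlgebra.ι k 1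
noncomputable def Z (k : Type) [Field k] : F3 k := FreeAlgebra.ι k 2

/-- The quotient of the free algebra on `x, y, z` by the two-sided ideal
generated by the set `rels`. -/
abbrev quotAlg (k : Type) [Field k] (rels : Set (F3 k)) : Type :=
  RingQuot (fun a b : F3 k => a ∈ rels ∧ b = 0)

/-- The image of the `i`-th generator in the quotient algebra. -/
noncomputable def gen (k : Type) [Field k] (rels : Set (F3 k)) (i : Fin 3) :
    quotAlg k rels :=
  RingQuot.mkAlgHom k (fun a b : F3 k => a ∈ rels ∧ b = 0) (FreeAlgebra.ι k i)

/-- The `k`-linear span of the images of the generators in the quotient. -/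
noncomputable def genSpan (k : Type) [Field k] (rels : Set (F3 k)) :
    Submodule k (quotAlg k rels) :=
  Submodule.span k (Set.range (gen k rels))

/-- There is a graded isomorphism between the two quotient algebras:
a `k`-algebra isomorphism carrying the span of the generators onto the
span of the generators. -/
def GradedIso (k : Type) [Field k] (r1 r2 : Set (F3 k)) : Prop :=
  ∃ φ : quotAlg k r1 ≃ₐ[k] quotAlg k r2,
    Submodule.map φ.toLinearMap (genSpan k r1) = genSpan k r2

/-- Relations of `S'(d,ε) = k⟨x,y,z⟩/⟨xy − yx, zy − yz, zx − d·xz + ε·y²⟩`. -/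
noncomputable def S'rel (k : Type) [Field k] (d ε : k) : Set (F3 k) :=
  {X k * Y k - Y k * X k, Z k * Y k - Y k * Z k,
   Z k * X k - d • (X k * Z k) + ε • Y k ^ 2}


variable {k : Type} [Field k]

abbrev Pk (k : Type) [Field k] := MvPolynomial (Fin 3) k

def bas (k : Type) [Field k] : Module.Basis (Fin 3 →₀ ℕ) k (Pk k) := MvPolynomial.basisMonomials (Fin 3) k

def fs (i j l : ℕ) : Fin 3 →₀ ℕ := Finsupp.single 0 i + Finsupp.single 1 j + Finsupp.single 2 l

lemma fs_apply0 (i j l : ℕ) : fs i j l 0 = i := by simp [fs, Finsupp.single_apply]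
lemma fs_apply1 (i j l : ℕ) : fs i j l 1 = j := by simp [fs, Finsupp.single_apply]
lemma fs_apply2 (i j l : ℕ) : fs i j l 2 = l := by simp [fs, Finsupp.single_apply]

lemma eq_fs (m : Fin 3 →₀ ℕ) : m = fs (m 0) (m 1) (m 2) := by
  ext a
  fin_cases a <;> simp [fs, Finsupp.single_apply]

lemma fs_inj {i j l i' j' l' : ℕ} (h : fs i j l = fs i' j' l') : i = i' ∧ j = j' ∧ l = l' := by
  refine ⟨?_, ?_, ?_⟩
  · have := DFunLike.congr_fun h 0
    simpa [fs_apply0] using this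
  · have := DFunLike.congr_fun h 1
    simpa [fs_apply1] using this
  · have := DFunLike.congr_fun h 2
    simpa [fs_apply2] using this

def M3 (k : Type) [Field k] (i j l : ℕ) : Pk k := MvPolynomial.monomial (fs i j l) 1

lemma bas_fs (i j l : ℕ) : bas k (fs i j l) = M3 k i j l := by
  simp [bas, M3, MvPolynomial.coe_basisMonomials]

/-- coefficients c_i with c_0 = 0, c_{i+1} = d c_i + 1 -/
def cf (d : k) : ℕ → k
  | 0 => 0
  | (n+1) => d * cf d n + 1

def Xop (k : Type) [Field k] : Module.End k (Pk k) :=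
  (bas k).constr k (fun m => M3 k (m 0 + 1) (m 1) (m 2))

def Yop (k : Type) [Field k] : Module.End k (Pk k) :=
  (bas k).constr k (fun m => M3 k (m 0) (m 1 + 1) (m 2))

def Zop (d ε : k) : Module.End k (Pk k) :=
  (bas k).constr k (fun m =>
    d ^ (m 0) • M3 k (m 0) (m 1) (m 2 + 1) - (ε * cf d (m 0)) • M3 k (m 0 - 1) (m 1 + 2) (m 2))

lemma Xop_M3 (i j l : ℕ) : Xop k (M3 k i j l) = M3 k (i+1) j l := by
  rw [← bas_fs, Xop, Module.Basis.constr_basis, fs_apply0, fs_apply1, fs_apply2]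

lemma Yop_M3 (i j l : ℕ) : Yop k (M3 k i j l) = M3 k i (j+1) l := by
  rw [← bas_fs, Yop, Module.Basis.constr_basis, fs_apply0, fs_apply1, fs_apply2]

lemma Zop_M3 (d ε : k) (i j l : ℕ) :
    Zop d ε (M3 k i j l) = d ^ i • M3 k i j (l+1) - (ε * cf d i) • M3 k (i-1) (j+2) l := by
  rw [← bas_fs, Zop, Module.Basis.constr_basis, fs_apply0, fs_apply1, fs_apply2]

lemma end_ext {f g : Module.End k (Pk k)} (h : ∀ i j l, f (M3 k i j l) = g (M3 k i j l)) :
    f = g := by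
  apply (bas k).ext
  intro m
  rw [eq_fs m, bas_fs]
  exact h _ _ _

lemma relXY : Xop k * Yop k - Yop k * Xop k = 0 := by
  apply end_ext
  intro i j l
  simp [Module.End.mul_apply, Xop_M3, Yop_M3]

lemma relZY (d ε : k) : Zop d ε * Yop k - Yop k * Zop d ε = 0 := by
  apply end_ext
  intro i j l
  simp only [Module.End.mul_apply, Yop_M3, Zop_M3, LinearMap.sub_apply, LinearMap.zero_apply,
    map_smul, map_sub]
  have : j + 1 + 2 = j + 2 + 1 := by omega
  rw [this, sub_self]

lemma relZX (d ε : k) :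
    Zop d ε * Xop k - d • (Xop k * Zop d ε) + ε • (Yop k)^2 = 0 := by
  apply end_ext
  intro i j l
  simp only [LinearMap.add_apply, LinearMap.sub_apply, LinearMap.smul_apply, Module.End.mul_apply,
    pow_two, LinearMap.zero_apply, Xop_M3, Yop_M3, Zop_M3, map_smul, map_sub]
  have hj : j + 1 + 1 = j + 2 := by omega
  rw [hj]
  cases i with
  | zero =>
      show (_ : Pk k) = 0
      norm_num [cf]
  | succ n =>
      have h1 : n + 1 + 1 - 1 = n + 1 := by omega
      have h2 : n + 1 - 1 + 1 = n + 1 := by omega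
      rw [h1, h2]
      show (_ : Pk k) = 0
      rw [show cf d (n+1+1) = d * (d * cf d n + 1) + 1 from rfl,
        show cf d (n+1) = d * cf d n + 1 from rfl]
      module


lemma fs_eq_iff {i j l i' j' l' : ℕ} : fs i j l = fs i' j' l' ↔ (i = i' ∧ j = j' ∧ l = l') := by
  constructor
  · exact fs_inj
  · rintro ⟨rfl, rfl, rfl⟩; rfl

lemma one_M3 : (1 : Pk k) = M3 k 0 0 0 := by
  have : fs 0 0 0 = 0 := by simp [fs]
  simp [M3, this]

def ops (d ε : k) : Fin 3 → Module.End k (Pk k) := ![Xop k, Yop k, Zop d ε]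

def ρfree (d ε : k) : F3 k →ₐ[k] Module.End k (Pk k) := FreeAlgebra.lift k (ops d ε)

lemma ρfree_rel (d ε : k) : ∀ ⦃a b : F3 k⦄, (a ∈ S'rel k d ε ∧ b = 0) → ρfree d ε a = ρfree d ε b := by
  rintro a b ⟨ha, rfl⟩
  rw [map_zero]
  rcases ha with h | h | h <;> subst h <;>
    simp only [ρfree, X, Y, Z, map_sub, map_add, map_mul, map_smul, map_pow,
      FreeAlgebra.lift_ι_apply, ops, Matrix.cons_val_zero, Matrix.cons_val_one, Matrix.head_cons,
      Matrix.cons_val_two, Matrix.tail_cons]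
  · exact relXY
  · exact relZY d ε
  · exact relZX d ε

def ρq (d ε : k) : quotAlg k (S'rel k d ε) →ₐ[k] Module.End k (Pk k) :=
  RingQuot.liftAlgHom k ⟨ρfree d ε, ρfree_rel d ε⟩

lemma ρq_gen (d ε : k) (i : Fin 3) :
    ρq d ε (gen k (S'rel k d ε) i) = ops d ε i := by
  rw [gen, ρq, RingQuot.liftAlgHom_mkAlgHom_apply, ρfree, FreeAlgebra.lift_ι_apply]

lemma indep1 (d ε : k) (a b c : k)
    (h : a • gen k (S'rel k d ε) 0 + b • gen k (S'rel k d ε) 1 + c • gen k (S'rel k d ε) 2 = 0) :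
    a = 0 ∧ b = 0 ∧ c = 0 := by
  have h1 := congrArg (fun q => ρq d ε q (1 : Pk k)) h
  simp only [map_add, map_smul, map_zero, LinearMap.add_apply, LinearMap.smul_apply,
    LinearMap.zero_apply, ρq_gen, ops, Matrix.cons_val_zero, Matrix.cons_val_one,
    Matrix.head_cons, Matrix.cons_val_two, Matrix.tail_cons] at h1
  rw [one_M3, Xop_M3, Yop_M3, Zop_M3] at h1
  simp only [pow_zero, one_smul, cf, mul_zero, zero_smul, sub_zero] at h1
  refine ⟨?_, ?_, ?_⟩
  · have := congrArg (MvPolynomial.coeff (fs 1 0 0)) h1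
    simpa [M3, MvPolynomial.coeff_smul, MvPolynomial.coeff_monomial, fs_eq_iff] using this
  · have := congrArg (MvPolynomial.coeff (fs 0 1 0)) h1
    simpa [M3, MvPolynomial.coeff_smul, MvPolynomial.coeff_monomial, fs_eq_iff] using this
  · have := congrArg (MvPolynomial.coeff (fs 0 0 1)) h1
    simpa [M3, MvPolynomial.coeff_smul, MvPolynomial.coeff_monomial, fs_eq_iff] using this

lemma prod_table (d ε : k) (j l : Fin 3) :
    ρq d ε (gen k (S'rel k d ε) j * gen k (S'rel k d ε) l) (1 : Pk k) =
      ![![M3 k 2 0 0, M3 k 1 1 0, M3 k 1 0 1],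
        ![M3 k 1 1 0, M3 k 0 2 0, M3 k 0 1 1],
        ![d • M3 k 1 0 1 - ε • M3 k 0 2 0, M3 k 0 1 1, M3 k 0 0 2]] j l := by
  rw [map_mul, Module.End.mul_apply]
  rw [one_M3]
  fin_cases j <;> fin_cases l <;>
    simp [ρq_gen, ops, map_smul, map_sub, Xop_M3, Yop_M3, Zop_M3, cf]

lemma indep2 (d ε : k) (c : Fin 3 → Fin 3 → k)
    (h : ∑ j : Fin 3, ∑ l : Fin 3,
        c j l • (gen k (S'rel k d ε) j * gen k (S'rel k d ε) l) = 0) :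
    c 0 0 = 0 ∧ c 0 1 + c 1 0 = 0 ∧ c 0 2 + d * c 2 0 = 0 ∧
      c 1 1 - ε * c 2 0 = 0 ∧ c 1 2 + c 2 1 = 0 ∧ c 2 2 = 0 := by
  have h1 := congrArg (fun q => ρq d ε q (1 : Pk k)) h
  simp only [Fin.sum_univ_three, map_add, map_smul, map_zero, LinearMap.add_apply,
    LinearMap.smul_apply, LinearMap.zero_apply] at h1
  rw [prod_table d ε 0 0, prod_table d ε 0 1, prod_table d ε 0 2,
    prod_table d ε 1 0, prod_table d ε 1 1, prod_table d ε 1 2,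
    prod_table d ε 2 0, prod_table d ε 2 1, prod_table d ε 2 2] at h1
  simp only [Matrix.cons_val_zero, Matrix.cons_val_one, Matrix.head_cons, Matrix.cons_val_two,
    Matrix.tail_cons] at h1
  refine ⟨?_, ?_, ?_, ?_, ?_, ?_⟩
  · have := congrArg (MvPolynomial.coeff (fs 2 0 0)) h1
    simpa [M3, MvPolynomial.coeff_smul, MvPolynomial.coeff_monomial, fs_eq_iff] using this
  · have := congrArg (MvPolynomial.coeff (fs 1 1 0)) h1
    simpa [M3, MvPolynomial.coeff_smul, MvPolynomial.coeff_monomial, fs_eq_iff] using this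
  · have := congrArg (MvPolynomial.coeff (fs 1 0 1)) h1
    have h2 : c 0 2 + c 2 0 * d = 0 := by
      simpa [M3, MvPolynomial.coeff_smul, MvPolynomial.coeff_monomial, fs_eq_iff] using this
    linear_combination h2
  · have := congrArg (MvPolynomial.coeff (fs 0 2 0)) h1
    have h2 : c 1 1 + c 2 0 * -ε = 0 := by
      simpa [M3, MvPolynomial.coeff_smul, MvPolynomial.coeff_monomial, fs_eq_iff] using this
    linear_combination h2
  · have := congrArg (MvPolynomial.coeff (fs 0 1 1)) h1
    simpa [M3, MvPolynomial.coeff_smul, MvPolynomial.coeff_monomial, fs_eq_iff] using this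
  · have := congrArg (MvPolynomial.coeff (fs 0 0 2)) h1
    simpa [M3, MvPolynomial.coeff_smul, MvPolynomial.coeff_monomial, fs_eq_iff] using this

/-! ### Quotient relations and span lemmas -/

lemma mk_rel_zero {r : Set (F3 k)} {x : F3 k} (hx : x ∈ r) :
    RingQuot.mkAlgHom k (fun a b : F3 k => a ∈ r ∧ b = 0) x = 0 := by
  have h := RingQuot.mkAlgHom_rel k (s := fun a b : F3 k => a ∈ r ∧ b = 0)
    (x := x) (y := 0) ⟨hx, rfl⟩
  simpa using h

lemma relQ1 (d ε : k) :
    gen k (S'rel k d ε) 0 * gen k (S'rel k d ε) 1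
      - gen k (S'rel k d ε) 1 * gen k (S'rel k d ε) 0 = 0 := by
  have h := mk_rel_zero (k := k) (r := S'rel k d ε) (x := X k * Y k - Y k * X k)
    (by left; rfl)
  rw [map_sub, map_mul, map_mul] at h
  exact h

lemma relQ2 (d ε : k) :
    gen k (S'rel k d ε) 2 * gen k (S'rel k d ε) 1
      - gen k (S'rel k d ε) 1 * gen k (S'rel k d ε) 2 = 0 := by
  have h := mk_rel_zero (k := k) (r := S'rel k d ε) (x := Z k * Y k - Y k * Z k)
    (by right; left; rfl)
  rw [map_sub, map_mul, map_mul] at h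
  exact h

lemma relQ3 (d ε : k) :
    gen k (S'rel k d ε) 2 * gen k (S'rel k d ε) 0
      - d • (gen k (S'rel k d ε) 0 * gen k (S'rel k d ε) 2)
      + ε • (gen k (S'rel k d ε) 1 * gen k (S'rel k d ε) 1) = 0 := by
  have h := mk_rel_zero (k := k) (r := S'rel k d ε)
    (x := Z k * X k - d • (X k * Z k) + ε • Y k ^ 2) (by right; right; rfl)
  rw [map_add, map_sub, map_mul, map_smul, map_mul, map_smul, map_pow, pow_two] at h
  exact h

lemma range_gen (r : Set (F3 k)) :
    Set.range (gen k r) = {gen k r 0, gen k r 1, gen k r 2} := by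
  ext q
  constructor
  · rintro ⟨i, rfl⟩
    fin_cases i
    · exact Set.mem_insert _ _
    · exact Set.mem_insert_of_mem _ (Set.mem_insert _ _)
    · exact Set.mem_insert_of_mem _ (Set.mem_insert_of_mem _ rfl)
  · intro hq
    rcases hq with rfl | rfl | rfl
    exacts [⟨0, rfl⟩, ⟨1, rfl⟩, ⟨2, rfl⟩]

lemma mem_span_triple {M : Type} [AddCommGroup M] [Module k M] {x y w z : M}
    (h : z ∈ Submodule.span k {x, y, w}) : ∃ a b c : k, z = a • x + b • y + c • w := by
  rw [Submodule.mem_span_insert] at h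
  obtain ⟨a, z', hz', rfl⟩ := h
  rw [Submodule.mem_span_pair] at hz'
  obtain ⟨b, c, hbc⟩ := hz'
  exact ⟨a, b, c, by rw [← hbc, add_assoc]⟩

lemma mulExpand {A : Type} [Ring A] [Algebra k A] (u0 u1 u2 v0 v1 v2 : k) (w0 w1 w2 : A) :
    (u0•w0 + u1•w1 + u2•w2) * (v0•w0 + v1•w1 + v2•w2) =
      (u0*v0)•(w0*w0) + (u0*v1)•(w0*w1) + (u0*v2)•(w0*w2) +
      (u1*v0)•(w1*w0) + (u1*v1)•(w1*w1) + (u1*v2)•(w1*w2) +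
      (u2*v0)•(w2*w0) + (u2*v1)•(w2*w1) + (u2*v2)•(w2*w2) := by
  simp only [add_mul, mul_add, smul_mul_assoc, mul_smul_comm, smul_smul]
  module

lemma indep2' (d ε : k) (c00 c01 c02 c10 c11 c12 c20 c21 c22 : k)
    (h : c00•(gen k (S'rel k d ε) 0 * gen k (S'rel k d ε) 0)
       + c01•(gen k (S'rel k d ε) 0 * gen k (S'rel k d ε) 1)
       + c02•(gen k (S'rel k d ε) 0 * gen k (S'rel k d ε) 2)
       + c10•(gen k (S'rel k d ε) 1 * gen k (S'rel k d ε) 0)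
       + c11•(gen k (S'rel k d ε) 1 * gen k (S'rel k d ε) 1)
       + c12•(gen k (S'rel k d ε) 1 * gen k (S'rel k d ε) 2)
       + c20•(gen k (S'rel k d ε) 2 * gen k (S'rel k d ε) 0)
       + c21•(gen k (S'rel k d ε) 2 * gen k (S'rel k d ε) 1)
       + c22•(gen k (S'rel k d ε) 2 * gen k (S'rel k d ε) 2) = 0) :
    c00 = 0 ∧ c01 + c10 = 0 ∧ c02 + d*c20 = 0 ∧ c11 - ε*c20 = 0 ∧ c12 + c21 = 0 ∧ c22 = 0 := by
  have h2 := indep2 d ε ![![c00,c01,c02],![c10,c11,c12],![c20,c21,c22]] ?_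
  · simpa using h2
  · simp only [Fin.sum_univ_three, Matrix.cons_val_zero, Matrix.cons_val_one, Matrix.head_cons,
      Matrix.cons_val_two, Matrix.tail_cons]
    rw [← h]
    module

/-! ### Extracting the coefficient system from a graded isomorphism -/

lemma system (d d' ε ε' : k)
    (h : GradedIso k (S'rel k d ε) (S'rel k d' ε')) :
    ∃ a1 a2 a3 b1 b2 b3 c1 c2 c3 : k,
      (a1*(b2*c3 - b3*c2) - a2*(b1*c3 - b3*c1) + a3*(b1*c2 - b2*c1) ≠ 0) ∧
      ((a1*b3 - b1*a3) + d'*(a3*b1 - b3*a1) = 0) ∧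
      ((c1*b3 - b1*c3) + d'*(c3*b1 - b3*c1) = 0) ∧
      (c1*a1 - d*(a1*c1) + ε*(b1*b1) = 0) ∧
      ((c1*a2 - d*(a1*c2) + ε*(b1*b2)) + (c2*a1 - d*(a2*c1) + ε*(b2*b1)) = 0) ∧
      ((c1*a3 - d*(a1*c3) + ε*(b1*b3)) + d'*(c3*a1 - d*(a3*c1) + ε*(b3*b1)) = 0) ∧
      ((c2*a2 - d*(a2*c2) + ε*(b2*b2)) - ε'*(c3*a1 - d*(a3*c1) + ε*(b3*b1)) = 0) ∧
      ((c2*a3 - d*(a2*c3) + ε*(b2*b3)) + (c3*a2 - d*(a3*c2) + ε*(b3*b2)) = 0) ∧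
      (c3*a3 - d*(a3*c3) + ε*(b3*b3) = 0) := by
  obtain ⟨φ, hspan⟩ := h
  have hmem : ∀ i, φ (gen k (S'rel k d ε) i) ∈
      Submodule.span k {gen k (S'rel k d' ε') 0, gen k (S'rel k d' ε') 1,
        gen k (S'rel k d' ε') 2} := by
    intro i
    rw [← range_gen, ← genSpan, ← hspan]
    have := Submodule.mem_map_of_mem (f := φ.toLinearMap)
      (Submodule.subset_span (R := k) (s := Set.range (gen k (S'rel k d ε)))
        (Set.mem_range_self i))
    simpa [genSpan] using this
  have hspan2 : Submodule.map φ.symm.toLinearMap (genSpan k (S'rel k d' ε'))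
      = genSpan k (S'rel k d ε) := by
    rw [← hspan, ← Submodule.map_comp]
    refine (congrArg (fun f => Submodule.map f (genSpan k (S'rel k d ε))) ?_).trans (Submodule.map_id _)
    ext x
    simp
  have hmem' : ∀ i, φ.symm (gen k (S'rel k d' ε') i) ∈
      Submodule.span k {gen k (S'rel k d ε) 0, gen k (S'rel k d ε) 1, gen k (S'rel k d ε) 2} := by
    intro i
    rw [← range_gen, ← genSpan, ← hspan2]
    have := Submodule.mem_map_of_mem (f := φ.symm.toLinearMap)
      (Submodule.subset_span (R := k) (s := Set.range (gen k (S'rel k d' ε')))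
        (Set.mem_range_self i))
    simpa [genSpan] using this
  obtain ⟨a1, a2, a3, hA⟩ := mem_span_triple (hmem 0)
  obtain ⟨b1, b2, b3, hB⟩ := mem_span_triple (hmem 1)
  obtain ⟨c1, c2, c3, hC⟩ := mem_span_triple (hmem 2)
  obtain ⟨n11, n12, n13, hN1⟩ := mem_span_triple (hmem' 0)
  obtain ⟨n21, n22, n23, hN2⟩ := mem_span_triple (hmem' 1)
  obtain ⟨n31, n32, n33, hN3⟩ := mem_span_triple (hmem' 2)
  have hrow : ∀ (u1 u2 u3 t1 t2 t3 : k) (i : Fin 3),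
      φ (gen k (S'rel k d ε) i) = u1 • gen k (S'rel k d' ε') 0 + u2 • gen k (S'rel k d' ε') 1
        + u3 • gen k (S'rel k d' ε') 2 →
      gen k (S'rel k d ε) i = t1 • gen k (S'rel k d ε) 0 + t2 • gen k (S'rel k d ε) 1
        + t3 • gen k (S'rel k d ε) 2 →
      (u1*n11 + u2*n21 + u3*n31 - t1) • gen k (S'rel k d ε) 0
      + (u1*n12 + u2*n22 + u3*n32 - t2) • gen k (S'rel k d ε) 1
      + (u1*n13 + u2*n23 + u3*n33 - t3) • gen k (S'rel k d ε) 2 = 0 := by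
    intro u1 u2 u3 t1 t2 t3 i hu ht
    have hsym := φ.symm_apply_apply (gen k (S'rel k d ε) i)
    rw [hu, map_add, map_add, map_smul, map_smul, map_smul, hN1, hN2, hN3, ht] at hsym
    rw [← sub_eq_zero] at hsym
    rw [← hsym]
    module
  have hone : ∀ j : Fin 3, gen k (S'rel k d ε) 0 =
      (1:k) • gen k (S'rel k d ε) 0 + (0:k) • gen k (S'rel k d ε) 1
        + (0:k) • gen k (S'rel k d ε) 2 := by intro _; module
  have e0 := indep1 d ε _ _ _ (hrow a1 a2 a3 1 0 0 0 hA (by module))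
  have e1 := indep1 d ε _ _ _ (hrow b1 b2 b3 0 1 0 1 hB (by module))
  have e2 := indep1 d ε _ _ _ (hrow c1 c2 c3 0 0 1 2 hC (by module))
  rw [sub_eq_zero, sub_eq_zero, sub_eq_zero] at e0 e1 e2
  obtain ⟨e00, e01, e02⟩ := e0
  obtain ⟨e10, e11, e12⟩ := e1
  obtain ⟨e20, e21, e22⟩ := e2
  have hMN : (Matrix.of ![![a1,a2,a3],![b1,b2,b3],![c1,c2,c3]]) *
      (Matrix.of ![![n11,n12,n13],![n21,n22,n23],![n31,n32,n33]]) = 1 := by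
    ext i j
    fin_cases i <;> fin_cases j <;>
      simp [Matrix.mul_apply, Fin.sum_univ_three, Matrix.one_apply] <;>
      first
        | linear_combination e00 | linear_combination e01 | linear_combination e02
        | linear_combination e10 | linear_combination e11 | linear_combination e12
        | linear_combination e20 | linear_combination e21 | linear_combination e22
  have hdet : (Matrix.of ![![a1,a2,a3],![b1,b2,b3],![c1,c2,c3]]).det ≠ 0 := by
    have h2 : (Matrix.of ![![a1,a2,a3],![b1,b2,b3],![c1,c2,c3]]).det *
        (Matrix.of ![![n11,n12,n13],![n21,n22,n23],![n31,n32,n33]]).det = 1 := by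
      rw [← Matrix.det_mul, hMN, Matrix.det_one]
    exact left_ne_zero_of_mul_eq_one h2
  have hdet' : a1*(b2*c3 - b3*c2) - a2*(b1*c3 - b3*c1) + a3*(b1*c2 - b2*c1) ≠ 0 := by
    intro hz
    apply hdet
    rw [Matrix.det_fin_three]
    simp only [Matrix.of_apply, Matrix.cons_val', Matrix.cons_val_zero, Matrix.empty_val',
      Matrix.cons_val_fin_one, Matrix.cons_val_one, Matrix.head_cons, Matrix.head_fin_const,
      Matrix.cons_val_two, Matrix.tail_cons]
    linear_combination hz
  have hrel1 := congrArg φ (relQ1 d ε)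
  rw [map_sub, map_mul, map_mul, map_zero, hA, hB, mulExpand, mulExpand] at hrel1
  rw [← sub_eq_zero, sub_zero] at hrel1
  have q1 := indep2' d' ε' (a1*b1 - b1*a1) (a1*b2 - b1*a2) (a1*b3 - b1*a3)
    (a2*b1 - b2*a1) (a2*b2 - b2*a2) (a2*b3 - b2*a3)
    (a3*b1 - b3*a1) (a3*b2 - b3*a2) (a3*b3 - b3*a3) (by rw [← hrel1]; module)
  have hrel2 := congrArg φ (relQ2 d ε)
  rw [map_sub, map_mul, map_mul, map_zero, hC, hB, mulExpand, mulExpand] at hrel2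
  rw [← sub_eq_zero, sub_zero] at hrel2
  have q2 := indep2' d' ε' (c1*b1 - b1*c1) (c1*b2 - b1*c2) (c1*b3 - b1*c3)
    (c2*b1 - b2*c1) (c2*b2 - b2*c2) (c2*b3 - b2*c3)
    (c3*b1 - b3*c1) (c3*b2 - b3*c2) (c3*b3 - b3*c3) (by rw [← hrel2]; module)
  have hrel3 := congrArg φ (relQ3 d ε)
  rw [map_add, map_sub, map_mul, map_smul, map_mul, map_smul, map_mul, map_zero,
    hA, hB, hC, mulExpand, mulExpand, mulExpand] at hrel3
  rw [← sub_eq_zero, sub_zero] at hrel3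
  have q3 := indep2' d' ε' (c1*a1 - d*(a1*c1) + ε*(b1*b1)) (c1*a2 - d*(a1*c2) + ε*(b1*b2))
    (c1*a3 - d*(a1*c3) + ε*(b1*b3)) (c2*a1 - d*(a2*c1) + ε*(b2*b1))
    (c2*a2 - d*(a2*c2) + ε*(b2*b2)) (c2*a3 - d*(a2*c3) + ε*(b2*b3))
    (c3*a1 - d*(a3*c1) + ε*(b3*b1)) (c3*a2 - d*(a3*c2) + ε*(b3*b2))
    (c3*a3 - d*(a3*c3) + ε*(b3*b3)) (by rw [← hrel3]; module)
  refine ⟨a1, a2, a3, b1, b2, b3, c1, c2, c3, hdet', ?_, ?_, ?_, ?_, ?_, ?_, ?_, ?_⟩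
  · linear_combination q1.2.2.1
  · linear_combination q2.2.2.1
  · linear_combination q3.1
  · linear_combination q3.2.1
  · linear_combination q3.2.2.1
  · linear_combination q3.2.2.2.1
  · linear_combination q3.2.2.2.2.1
  · linear_combination q3.2.2.2.2.2

/-! ### The scalar analysis -/

lemma epsAux {ε ε' b2 t : k} (hε : ε = 0 ∨ ε = 1) (hε' : ε' = 0 ∨ ε' = 1)
    (hb2 : b2 ≠ 0) (ht : t ≠ 0) (hee : ε*(b2*b2) = ε'*t) : ε = ε' := by
  rcases hε with rfl | rfl
  · rcases hε' with rfl | rfl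
    · rfl
    · exfalso
      rw [zero_mul, one_mul] at hee
      exact ht hee.symm
  · rcases hε' with rfl | rfl
    · exfalso
      rw [one_mul, zero_mul] at hee
      exact hb2 (mul_self_eq_zero.mp hee)
    · rfl

lemma scalarLemma (d d' ε ε' : k) (hd : d ≠ 1) (hd' : d' ≠ 1)
    (hε : ε = 0 ∨ ε = 1) (hε' : ε' = 0 ∨ ε' = 1)
    (a1 a2 a3 b1 b2 b3 c1 c2 c3 : k)
    (hdet : a1*(b2*c3 - b3*c2) - a2*(b1*c3 - b3*c1) + a3*(b1*c2 - b2*c1) ≠ 0)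
    (hR1r : (a1*b3 - b1*a3) + d'*(a3*b1 - b3*a1) = 0)
    (hR2r : (c1*b3 - b1*c3) + d'*(c3*b1 - b3*c1) = 0)
    (hB1 : c1*a1 - d*(a1*c1) + ε*(b1*b1) = 0)
    (hB2 : (c1*a2 - d*(a1*c2) + ε*(b1*b2)) + (c2*a1 - d*(a2*c1) + ε*(b2*b1)) = 0)
    (hB3 : (c1*a3 - d*(a1*c3) + ε*(b1*b3)) + d'*(c3*a1 - d*(a3*c1) + ε*(b3*b1)) = 0)
    (hB4 : (c2*a2 - d*(a2*c2) + ε*(b2*b2)) - ε'*(c3*a1 - d*(a3*c1) + ε*(b3*b1)) = 0)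
    (hB5 : (c2*a3 - d*(a2*c3) + ε*(b2*b3)) + (c3*a2 - d*(a3*c2) + ε*(b3*b2)) = 0)
    (hB6 : c3*a3 - d*(a3*c3) + ε*(b3*b3) = 0) :
    ε = ε' ∧ (d' = d ∨ (d ≠ 0 ∧ d' = d⁻¹)) := by
  have h1d : (1:k) - d ≠ 0 := sub_ne_zero.mpr (Ne.symm hd)
  have h1d' : (1:k) - d' ≠ 0 := sub_ne_zero.mpr (Ne.symm hd')
  have hR1 : a1*b3 - a3*b1 = 0 := by
    have h' : (1 - d')*(a1*b3 - a3*b1) = 0 := by linear_combination hR1r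
    exact (mul_eq_zero.mp h').resolve_left h1d'
  have hR2 : c1*b3 - c3*b1 = 0 := by
    have h' : (1 - d')*(c1*b3 - c3*b1) = 0 := by linear_combination hR2r
    exact (mul_eq_zero.mp h').resolve_left h1d'
  -- Step 1 : b1 = 0 and b3 = 0
  have hb13 : b1 = 0 ∧ b3 = 0 := by
    by_cases hb1 : b1 = 0
    · refine ⟨hb1, ?_⟩
      by_contra hb3
      have ha1 : a1 = 0 := by
        have h' : a1 * b3 = 0 := by linear_combination hR1 + a3*hb1
        exact (mul_eq_zero.mp h').resolve_right hb3
      have hc1 : c1 = 0 := by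
        have h' : c1 * b3 = 0 := by linear_combination hR2 + c3*hb1
        exact (mul_eq_zero.mp h').resolve_right hb3
      exact hdet (by rw [ha1, hb1, hc1]; ring)
    · exfalso
      by_cases hb3 : b3 = 0
      · have ha3 : a3 = 0 := by
          have h' : a3 * b1 = 0 := by linear_combination -hR1 + a1*hb3
          exact (mul_eq_zero.mp h').resolve_right hb1
        have hc3 : c3 = 0 := by
          have h' : c3 * b1 = 0 := by linear_combination -hR2 + c1*hb3
          exact (mul_eq_zero.mp h').resolve_right hb1
        exact hdet (by rw [ha3, hb3, hc3]; ring)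
      · have hdb : (a1*(b2*c3 - b3*c2) - a2*(b1*c3 - b3*c1) + a3*(b1*c2 - b2*c1)) * b1 = 0 := by
          linear_combination (b2*c1 - b1*c2)*hR1 + (a2*b1 - a1*b2)*hR2
        exact hdet ((mul_eq_zero.mp hdb).resolve_right hb1)
  obtain ⟨hb1, hb3⟩ := hb13
  -- simplified equations
  have hE1 : a1*c1 = 0 := by
    have h' : (1-d)*(a1*c1) = 0 := by linear_combination hB1 + (-ε*b1)*hb1
    exact (mul_eq_zero.mp h').resolve_left h1d
  have hE2 : a3*c3 = 0 := by
    have h' : (1-d)*(a3*c3) = 0 := by linear_combination hB6 + (-ε*b3)*hb3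
    exact (mul_eq_zero.mp h').resolve_left h1d
  have hE3 : a1*c2 + a2*c1 = 0 := by
    have h' : (1-d)*(a1*c2 + a2*c1) = 0 := by linear_combination hB2 + (-2*ε*b2)*hb1
    exact (mul_eq_zero.mp h').resolve_left h1d
  have hE4 : a2*c3 + a3*c2 = 0 := by
    have h' : (1-d)*(a2*c3 + a3*c2) = 0 := by linear_combination hB5 + (-2*ε*b2)*hb3
    exact (mul_eq_zero.mp h').resolve_left h1d
  have hE5 : a3*c1*(1 - d*d') + a1*c3*(d' - d) = 0 := by
    linear_combination hB3 + (-ε*(1+d')*b3)*hb1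
  have hE6 : (1-d)*(a2*c2) + ε*(b2*b2) - ε'*(a1*c3 - d*(a3*c1)) = 0 := by
    linear_combination hB4 + (ε'*ε*b3)*hb1
  -- main case analysis
  by_cases ha1 : a1 = 0
  · by_cases hc1 : c1 = 0
    · exact absurd (by rw [ha1, hb1, hc1]; ring) hdet
    · -- antidiagonal case
      have ha2 : a2 = 0 := by
        have h' : a2*c1 = 0 := by linear_combination hE3 - c2*ha1
        exact (mul_eq_zero.mp h').resolve_right hc1
      have ha3 : a3 ≠ 0 := by
        intro h0
        exact hdet (by rw [ha1, ha2, h0]; ring)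
      have hc3 : c3 = 0 := (mul_eq_zero.mp hE2).resolve_left ha3
      have hc2 : c2 = 0 := by
        have h' : a3*c2 = 0 := by linear_combination hE4 - c3*ha2
        exact (mul_eq_zero.mp h').resolve_left ha3
      have hdd' : d*d' = 1 := by
        have h5 : a3*c1*(1 - d*d') = 0 := by linear_combination hE5 - c3*(d'-d)*ha1
        have h6 := (mul_eq_zero.mp h5).resolve_left (mul_ne_zero ha3 hc1)
        linear_combination -h6
      have hd0 : d ≠ 0 := by
        intro h0
        rw [h0, zero_mul] at hdd'
        exact zero_ne_one hdd'
      have hd'i : d' = d⁻¹ := by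
        field_simp
        linear_combination hdd'
      have hb2 : b2 ≠ 0 := by
        intro h0
        exact hdet (by rw [ha1, ha2, hb1, hb3, hc2, hc3, h0]; ring)
      have hee : ε*(b2*b2) = ε'*(-(d*(a3*c1))) := by
        linear_combination hE6 - (1-d)*c2*ha2 + ε'*c3*ha1
      exact ⟨epsAux hε hε' hb2 (by simp [hd0, ha3, hc1, mul_ne_zero]) hee,
        Or.inr ⟨hd0, hd'i⟩⟩
  · -- diagonal case
    have hc1 : c1 = 0 := (mul_eq_zero.mp hE1).resolve_left ha1
    have hc2 : c2 = 0 := by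
      have h' : a1*c2 = 0 := by linear_combination hE3 - a2*hc1
      exact (mul_eq_zero.mp h').resolve_left ha1
    have hc3 : c3 ≠ 0 := by
      intro h0
      exact hdet (by rw [hc1, hc2, h0]; ring)
    have ha3 : a3 = 0 := (mul_eq_zero.mp hE2).resolve_right hc3
    have ha2 : a2 = 0 := by
      have h' : a2*c3 = 0 := by linear_combination hE4 - c2*ha3
      exact (mul_eq_zero.mp h').resolve_right hc3
    have hd'd : d' = d := by
      have h5 : a1*(c3*(d' - d)) = 0 := by linear_combination hE5 - c1*(1 - d*d')*ha3
      have h6 := (mul_eq_zero.mp ((mul_eq_zero.mp h5).resolve_left ha1)).resolve_left hc3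
      linear_combination h6
    have hb2 : b2 ≠ 0 := by
      intro h0
      exact hdet (by rw [ha2, ha3, hb1, hb3, hc2, h0]; ring)
    have hee : ε*(b2*b2) = ε'*(a1*c3) := by
      linear_combination hE6 - (1-d)*c2*ha2 - ε'*d*c1*ha3
    exact ⟨epsAux hε hε' hb2 (mul_ne_zero ha1 hc3) hee, Or.inl hd'd⟩

/-! ### Backward direction -/

lemma gradedIso_refl (r : Set (F3 k)) : GradedIso k r r := by
  refine ⟨AlgEquiv.refl, ?_⟩
  have h : (AlgEquiv.refl : quotAlg k r ≃ₐ[k] quotAlg k r).toLinearMap = LinearMap.id := rfl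
  rw [h, Submodule.map_id]

lemma gradedIso_inv [IsAlgClosed k] (d ε : k) (hd0 : d ≠ 0) (hε : ε = 0 ∨ ε = 1) :
    GradedIso k (S'rel k d ε) (S'rel k d⁻¹ ε) := by
  obtain ⟨β, hβ0, hβ⟩ : ∃ β : k, β ≠ 0 ∧ ε*(β*β) + ε*d = 0 := by
    rcases hε with rfl | rfl
    · exact ⟨1, one_ne_zero, by ring⟩
    · obtain ⟨β, hβ⟩ := IsAlgClosed.exists_pow_nat_eq (-d) (n := 2) (by norm_num)
      refine ⟨β, ?_, by linear_combination hβ⟩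
      intro h0
      rw [h0] at hβ
      exact hd0 (by linear_combination hβ)
  have hdd : d * d⁻¹ = 1 := mul_inv_cancel₀ hd0
  have hdd' : d⁻¹ * d = 1 := inv_mul_cancel₀ hd0
  have hββ : β⁻¹ * β = 1 := inv_mul_cancel₀ hβ0
  have hββ' : β * β⁻¹ = 1 := mul_inv_cancel₀ hβ0
  have hβinv : ε*(β⁻¹*β⁻¹) + ε*d⁻¹ = 0 := by
    have hne : d*(β*β) ≠ 0 := mul_ne_zero hd0 (mul_ne_zero hβ0 hβ0)
    have h' : (ε*(β⁻¹*β⁻¹) + ε*d⁻¹) * (d*(β*β)) = 0 := by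
      linear_combination (ε*d*(β⁻¹*β + 1))*hββ + (ε*β*β)*hdd' + hβ
    exact (mul_eq_zero.mp h').resolve_right hne
  -- the forward algebra map
  have hf : ∀ ⦃a b : F3 k⦄, (a ∈ S'rel k d ε ∧ b = 0) →
      FreeAlgebra.lift k
        ![gen k (S'rel k d⁻¹ ε) 2, β • gen k (S'rel k d⁻¹ ε) 1, gen k (S'rel k d⁻¹ ε) 0] a =
      FreeAlgebra.lift k
        ![gen k (S'rel k d⁻¹ ε) 2, β • gen k (S'rel k d⁻¹ ε) 1, gen k (S'rel k d⁻¹ ε) 0] b := by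
    rintro a _ ⟨ha, rfl⟩
    rw [map_zero]
    rcases ha with h | h | h <;> subst h <;>
      simp only [X, Y, Z, map_sub, map_add, map_mul, map_smul, map_pow,
        FreeAlgebra.lift_ι_apply, Matrix.cons_val_zero, Matrix.cons_val_one, Matrix.head_cons,
        Matrix.cons_val_two, Matrix.tail_cons]
    · have e : gen k (S'rel k d⁻¹ ε) 2 * (β • gen k (S'rel k d⁻¹ ε) 1)
          - (β • gen k (S'rel k d⁻¹ ε) 1) * gen k (S'rel k d⁻¹ ε) 2
          = β • (gen k (S'rel k d⁻¹ ε) 2 * gen k (S'rel k d⁻¹ ε) 1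
              - gen k (S'rel k d⁻¹ ε) 1 * gen k (S'rel k d⁻¹ ε) 2) := by
        rw [smul_sub, smul_mul_assoc, mul_smul_comm]
      rw [e, relQ2, smul_zero]
    · have e : gen k (S'rel k d⁻¹ ε) 0 * (β • gen k (S'rel k d⁻¹ ε) 1)
          - (β • gen k (S'rel k d⁻¹ ε) 1) * gen k (S'rel k d⁻¹ ε) 0
          = β • (gen k (S'rel k d⁻¹ ε) 0 * gen k (S'rel k d⁻¹ ε) 1
              - gen k (S'rel k d⁻¹ ε) 1 * gen k (S'rel k d⁻¹ ε) 0) := by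
        rw [smul_sub, smul_mul_assoc, mul_smul_comm]
      rw [e, relQ1, smul_zero]
    · have e2 : (β • gen k (S'rel k d⁻¹ ε) 1) ^ 2
          = (β*β) • (gen k (S'rel k d⁻¹ ε) 1 * gen k (S'rel k d⁻¹ ε) 1) := by
        rw [pow_two, smul_mul_assoc, mul_smul_comm, smul_smul]
      rw [e2, smul_smul]
      calc gen k (S'rel k d⁻¹ ε) 0 * gen k (S'rel k d⁻¹ ε) 2
            - d • (gen k (S'rel k d⁻¹ ε) 2 * gen k (S'rel k d⁻¹ ε) 0)
            + (ε*(β*β)) • (gen k (S'rel k d⁻¹ ε) 1 * gen k (S'rel k d⁻¹ ε) 1)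
          = (-d) • (gen k (S'rel k d⁻¹ ε) 2 * gen k (S'rel k d⁻¹ ε) 0
              - d⁻¹ • (gen k (S'rel k d⁻¹ ε) 0 * gen k (S'rel k d⁻¹ ε) 2)
              + ε • (gen k (S'rel k d⁻¹ ε) 1 * gen k (S'rel k d⁻¹ ε) 1))
            + (1 - d*d⁻¹) • (gen k (S'rel k d⁻¹ ε) 0 * gen k (S'rel k d⁻¹ ε) 2)
            + (ε*(β*β) + ε*d) • (gen k (S'rel k d⁻¹ ε) 1 * gen k (S'rel k d⁻¹ ε) 1) := by
              module
        _ = 0 := by rw [relQ3, hdd, hβ]; simp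
  -- the backward algebra map
  have hg : ∀ ⦃a b : F3 k⦄, (a ∈ S'rel k d⁻¹ ε ∧ b = 0) →
      FreeAlgebra.lift k
        ![gen k (S'rel k d ε) 2, β⁻¹ • gen k (S'rel k d ε) 1, gen k (S'rel k d ε) 0] a =
      FreeAlgebra.lift k
        ![gen k (S'rel k d ε) 2, β⁻¹ • gen k (S'rel k d ε) 1, gen k (S'rel k d ε) 0] b := by
    rintro a _ ⟨ha, rfl⟩
    rw [map_zero]
    rcases ha with h | h | h <;> subst h <;>
      simp only [X, Y, Z, map_sub, map_add, map_mul, map_smul, map_pow,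
        FreeAlgebra.lift_ι_apply, Matrix.cons_val_zero, Matrix.cons_val_one, Matrix.head_cons,
        Matrix.cons_val_two, Matrix.tail_cons]
    · have e : gen k (S'rel k d ε) 2 * (β⁻¹ • gen k (S'rel k d ε) 1)
          - (β⁻¹ • gen k (S'rel k d ε) 1) * gen k (S'rel k d ε) 2
          = β⁻¹ • (gen k (S'rel k d ε) 2 * gen k (S'rel k d ε) 1
              - gen k (S'rel k d ε) 1 * gen k (S'rel k d ε) 2) := by
        rw [smul_sub, smul_mul_assoc, mul_smul_comm]
      rw [e, relQ2, smul_zero]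
    · have e : gen k (S'rel k d ε) 0 * (β⁻¹ • gen k (S'rel k d ε) 1)
          - (β⁻¹ • gen k (S'rel k d ε) 1) * gen k (S'rel k d ε) 0
          = β⁻¹ • (gen k (S'rel k d ε) 0 * gen k (S'rel k d ε) 1
              - gen k (S'rel k d ε) 1 * gen k (S'rel k d ε) 0) := by
        rw [smul_sub, smul_mul_assoc, mul_smul_comm]
      rw [e, relQ1, smul_zero]
    · have e2 : (β⁻¹ • gen k (S'rel k d ε) 1) ^ 2
          = (β⁻¹*β⁻¹) • (gen k (S'rel k d ε) 1 * gen k (S'rel k d ε) 1) := by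
        rw [pow_two, smul_mul_assoc, mul_smul_comm, smul_smul]
      rw [e2, smul_smul]
      calc gen k (S'rel k d ε) 0 * gen k (S'rel k d ε) 2
            - d⁻¹ • (gen k (S'rel k d ε) 2 * gen k (S'rel k d ε) 0)
            + (ε*(β⁻¹*β⁻¹)) • (gen k (S'rel k d ε) 1 * gen k (S'rel k d ε) 1)
          = (-d⁻¹) • (gen k (S'rel k d ε) 2 * gen k (S'rel k d ε) 0
              - d • (gen k (S'rel k d ε) 0 * gen k (S'rel k d ε) 2)
              + ε • (gen k (S'rel k d ε) 1 * gen k (S'rel k d ε) 1))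
            + (1 - d⁻¹*d) • (gen k (S'rel k d ε) 0 * gen k (S'rel k d ε) 2)
            + (ε*(β⁻¹*β⁻¹) + ε*d⁻¹) • (gen k (S'rel k d ε) 1 * gen k (S'rel k d ε) 1) := by
              module
        _ = 0 := by rw [relQ3, hdd', hβinv]; simp
  set Φa := (RingQuot.liftAlgHom k (B := quotAlg k (S'rel k d⁻¹ ε)))
    ⟨FreeAlgebra.lift k
      ![gen k (S'rel k d⁻¹ ε) 2, β • gen k (S'rel k d⁻¹ ε) 1, gen k (S'rel k d⁻¹ ε) 0], hf⟩
    with hΦa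
  set Ψa := (RingQuot.liftAlgHom k (B := quotAlg k (S'rel k d ε)))
    ⟨FreeAlgebra.lift k
      ![gen k (S'rel k d ε) 2, β⁻¹ • gen k (S'rel k d ε) 1, gen k (S'rel k d ε) 0], hg⟩
    with hΨa
  have hΦgen : ∀ i : Fin 3, Φa (gen k (S'rel k d ε) i) =
      ![gen k (S'rel k d⁻¹ ε) 2, β • gen k (S'rel k d⁻¹ ε) 1, gen k (S'rel k d⁻¹ ε) 0] i := by
    intro i
    rw [hΦa]
    unfold gen
    exact (RingQuot.liftAlgHom_mkAlgHom_apply _ _ _ _).trans (FreeAlgebra.lift_ι_apply _ _)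
  have hΨgen : ∀ i : Fin 3, Ψa (gen k (S'rel k d⁻¹ ε) i) =
      ![gen k (S'rel k d ε) 2, β⁻¹ • gen k (S'rel k d ε) 1, gen k (S'rel k d ε) 0] i := by
    intro i
    rw [hΨa]
    unfold gen
    exact (RingQuot.liftAlgHom_mkAlgHom_apply _ _ _ _).trans (FreeAlgebra.lift_ι_apply _ _)
  have hcomp1 : Φa.comp Ψa = AlgHom.id k (quotAlg k (S'rel k d⁻¹ ε)) := by
    apply RingQuot.ringQuot_ext'
    apply FreeAlgebra.hom_ext
    funext i
    have : (RingQuot.mkAlgHom k (fun a b : F3 k => a ∈ S'rel k d⁻¹ ε ∧ b = 0))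
        (FreeAlgebra.ι k i) = gen k (S'rel k d⁻¹ ε) i := rfl
    simp only [Function.comp_apply, AlgHom.coe_comp, AlgHom.coe_id, id_eq, this]
    fin_cases i <;>
      simp [hΨgen, hΦgen, map_smul, smul_smul, hββ', hββ]
  have hcomp2 : Ψa.comp Φa = AlgHom.id k (quotAlg k (S'rel k d ε)) := by
    apply RingQuot.ringQuot_ext'
    apply FreeAlgebra.hom_ext
    funext i
    have : (RingQuot.mkAlgHom k (fun a b : F3 k => a ∈ S'rel k d ε ∧ b = 0))
        (FreeAlgebra.ι k i) = gen k (S'rel k d ε) i := rfl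
    simp only [Function.comp_apply, AlgHom.coe_comp, AlgHom.coe_id, id_eq, this]
    fin_cases i <;>
      simp [hΨgen, hΦgen, map_smul, smul_smul, hββ', hββ]
  refine ⟨AlgEquiv.ofAlgHom Φa Ψa hcomp1 hcomp2, ?_⟩
  have hco : ∀ x, (AlgEquiv.ofAlgHom Φa Ψa hcomp1 hcomp2).toLinearMap x = Φa x := fun _ => rfl
  rw [genSpan, genSpan, range_gen, range_gen, Submodule.map_span]
  have himg : (AlgEquiv.ofAlgHom Φa Ψa hcomp1 hcomp2).toLinearMap ''
      {gen k (S'rel k d ε) 0, gen k (S'rel k d ε) 1, gen k (S'rel k d ε) 2}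
      = {gen k (S'rel k d⁻¹ ε) 2, β • gen k (S'rel k d⁻¹ ε) 1, gen k (S'rel k d⁻¹ ε) 0} := by
    rw [Set.image_insert_eq, Set.image_insert_eq, Set.image_singleton]
    rw [hco, hco, hco, hΦgen 0, hΦgen 1, hΦgen 2]
    rfl
  rw [himg]
  apply le_antisymm
  · rw [Submodule.span_le]
    rintro x (rfl | rfl | rfl)
    · exact Submodule.subset_span (by right; right; rfl)
    · exact Submodule.smul_mem _ β (Submodule.subset_span (by right; left; rfl))
    · exact Submodule.subset_span (by left; rfl)
  · rw [Submodule.span_le]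
    rintro x (rfl | rfl | rfl)
    · exact Submodule.subset_span (by right; right; rfl)
    · have hmem1 := Submodule.smul_mem
        (Submodule.span k {gen k (S'rel k d⁻¹ ε) 2, β • gen k (S'rel k d⁻¹ ε) 1,
          gen k (S'rel k d⁻¹ ε) 0}) β⁻¹
        (Submodule.subset_span (by right; left; rfl :
          β • gen k (S'rel k d⁻¹ ε) 1 ∈ ({gen k (S'rel k d⁻¹ ε) 2,
            β • gen k (S'rel k d⁻¹ ε) 1, gen k (S'rel k d⁻¹ ε) 0} : Set _)))
      simpa [smul_smul, hββ] using hmem1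
    · exact Submodule.subset_span (by left; rfl)

theorem stmt8 (k : Type) [Field k] [IsAlgClosed k] (hchar : ringChar k ≠ 2)
    (d d' ε ε' : k) (hd : d ≠ 1) (hd' : d' ≠ 1)
    (hε : ε ∈ ({0, 1} : Set k)) (hε' : ε' ∈ ({0, 1} : Set k)) :
    GradedIso k (S'rel k d ε) (S'rel k d' ε') ↔
      ε = ε' ∧ (d' = d ∨ (d ≠ 0 ∧ d' = d⁻¹)) := by
  simp only [Set.mem_insert_iff, Set.mem_singleton_iff] at hε hε'
  constructor
  · intro h
    obtain ⟨a1, a2, a3, b1, b2, b3, c1, c2, c3, hdet, h1, h2, h3, h4, h5, h6, h7, h8⟩ :=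
      system d d' ε ε' h
    exact scalarLemma d d' ε ε' hd hd' hε hε' a1 a2 a3 b1 b2 b3 c1 c2 c3
      hdet h1 h2 h3 h4 h5 h6 h7 h8
  · rintro ⟨hee, hcase⟩
    subst hee
    rcases hcase with h | ⟨hd0, h⟩ <;> subst h
    · exact gradedIso_refl _
    · exact gradedIso_inv d ε hd0 hε
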